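/- For all (c₁,c₂) ∈ ℝ² and all z ∈ ℂ, D₂(c₁,c₂;z) = (z − α₁(c₁,c₂))(z − α₂(c₁,c₂))(z − α₃(c₁,c₂))(z − α₄(c₁,c₂)); that is, the roots of D₂(c₁,c₂;·), counted with multiplicity, are exactly α₁(c₁,c₂), α₂(c₁,c₂), α₃(c₁,c₂), α₄(c₁,c₂). -/
import Mathlib


noncomputable section

/-- The principal branch of the complex square root:
`√z = √r·e^{iφ/2}` for `z = r·e^{iφ}` with `r > 0` and `-π < φ ≤ π`. -/
def csqrt (z : ℂ) : ℂ := z ^ (1/2 : ℂ)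

/-- `α₁(c₁,c₂) = 3/2 - (1/2)√(5-4c₁+4√(1-4c₁+c₁²-c₂))`. -/
def alpha1 (c₁ c₂ : ℝ) : ℂ :=
  3/2 - (1/2) * csqrt (5 - 4 * (c₁ : ℂ) + 4 * csqrt (1 - 4 * (c₁ : ℂ) + (c₁ : ℂ) ^ 2 - (c₂ : ℂ)))

/-- `α₂(c₁,c₂) = 3/2 - (1/2)√(5-4c₁-4√(1-4c₁+c₁²-c₂))`. -/
def alpha2 (c₁ c₂ : ℝ) : ℂ :=
  3/2 - (1/2) * csqrt (5 - 4 * (c₁ : ℂ) - 4 * csqrt (1 - 4 * (c₁ : ℂ) + (c₁ : ℂ) ^ 2 - (c₂ : ℂ)))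

/-- `α₃(c₁,c₂) = 3/2 + (1/2)√(5-4c₁-4√(1-4c₁+c₁²-c₂))`. -/
def alpha3 (c₁ c₂ : ℝ) : ℂ :=
  3/2 + (1/2) * csqrt (5 - 4 * (c₁ : ℂ) - 4 * csqrt (1 - 4 * (c₁ : ℂ) + (c₁ : ℂ) ^ 2 - (c₂ : ℂ)))

/-- `α₄(c₁,c₂) = 3/2 + (1/2)√(5-4c₁+4√(1-4c₁+c₁²-c₂))`. -/
def alpha4 (c₁ c₂ : ℝ) : ℂ :=
  3/2 + (1/2) * csqrt (5 - 4 * (c₁ : ℂ) + 4 * csqrt (1 - 4 * (c₁ : ℂ) + (c₁ : ℂ) ^ 2 - (c₂ : ℂ)))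

/-- The quartic polynomial `D₂(c₁,c₂;z) = z(z-1)(z-2)(z-3) + c₁[z(z-1)+(z-2)(z-3)] + c₂`. -/
def D2 (c₁ c₂ : ℝ) (z : ℂ) : ℂ :=
  z * (z - 1) * (z - 2) * (z - 3) + (c₁ : ℂ) * (z * (z - 1) + (z - 2) * (z - 3)) + (c₂ : ℂ)


lemma csqrt_sq (z : ℂ) : csqrt z ^ 2 = z := by
  have h := Complex.cpow_nat_inv_pow z (n := 2) (by norm_num)
  simpa [csqrt, one_div, show ((2:ℕ):ℂ) = 2 by norm_num] using h

theorem stmt4 (c₁ c₂ : ℝ) (z : ℂ) :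
    D2 c₁ c₂ z =
      (z - alpha1 c₁ c₂) * (z - alpha2 c₁ c₂) * (z - alpha3 c₁ c₂) * (z - alpha4 c₁ c₂) := by
  set s := csqrt (1 - 4 * (c₁ : ℂ) + (c₁ : ℂ) ^ 2 - (c₂ : ℂ)) with hs_def
  set t₁ := csqrt (5 - 4 * (c₁ : ℂ) + 4 * s) with ht1_def
  set t₂ := csqrt (5 - 4 * (c₁ : ℂ) - 4 * s) with ht2_def
  have hs : s ^ 2 = 1 - 4 * (c₁ : ℂ) + (c₁ : ℂ) ^ 2 - (c₂ : ℂ) := csqrt_sq _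
  have h1 : t₁ ^ 2 = 5 - 4 * (c₁ : ℂ) + 4 * s := csqrt_sq _
  have h2 : t₂ ^ 2 = 5 - 4 * (c₁ : ℂ) - 4 * s := csqrt_sq _
  have expand : (z - alpha1 c₁ c₂) * (z - alpha2 c₁ c₂) * (z - alpha3 c₁ c₂) * (z - alpha4 c₁ c₂)
      = ((z - 3/2) ^ 2 - t₁ ^ 2 / 4) * ((z - 3/2) ^ 2 - t₂ ^ 2 / 4) := by
    rw [alpha1, alpha2, alpha3, alpha4, ← hs_def, ← ht1_def, ← ht2_def]; ring
  rw [expand, h1, h2, D2]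
  linear_combination hs
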